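/- Fix reals G, M, r₀, r > 0 and a, θ ∈ ℝ. For λ ∈ ℝ define ρ²(λ) = r² + λ²a²cos²θ, Δ(λ) = r² − 2GMλ²r + λ²a², Σ(λ) = (r² + λ²a²)² − λ²a²Δ(λ)sin²θ, Δ₀(λ) = r₀² − 2GMλ²r₀ + λ²a², Σ₀(λ) = (r₀² + λ²a²)² − λ²a²Δ₀(λ), and, for λ in the open interval around 0 on which Δ₀(λ) > 0 and Σ₀(λ) > 0, α(λ) = √( [ (ρ²(λ) − 2GMλ²r)·Σ₀(λ)² − 4G²M²a²λ⁶·r₀·(r₀Σ(λ) − 2rΣ₀(λ))·sin²θ ] / ( r₀²·ρ²(λ)·Δ₀(λ)·Σ₀(λ) ) ). Then: (i) α(0) = 1; (ii) α'(0) = 0; (iii) α''(0) = 2GM/r₀ − 2GM/r; and (iv) if r = r₀ and θ = π/2, then α(λ) = 1 for every λ with Δ₀(λ) > 0 and Σ₀(λ) > 0. -/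

import Mathlib

open Real

private lemma kerr_poly5 (c0 c1 c2 c3 c4 c5 x : ℝ) :
    HasDerivAt (fun u : ℝ => c0 + c1 * u + c2 * u ^ 2 + c3 * u ^ 3 + c4 * u ^ 4 + c5 * u ^ 5)
      (c1 + 2 * c2 * x + 3 * c3 * x ^ 2 + 4 * c4 * x ^ 3 + 5 * c5 * x ^ 4) x := by
  have h : HasDerivAt (fun u : ℝ => c0 + c1 * u + c2 * u ^ 2 + c3 * u ^ 3 + c4 * u ^ 4 + c5 * u ^ 5) _ x :=
    (((((hasDerivAt_const x c0).add ((hasDerivAt_id x).const_mul c1)).add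
      ((hasDerivAt_pow 2 x).const_mul c2)).add
      ((hasDerivAt_pow 3 x).const_mul c3)).add
      ((hasDerivAt_pow 4 x).const_mul c4)).add
      ((hasDerivAt_pow 5 x).const_mul c5)
  convert h using 1
  norm_num
  ring

noncomputable def kerrNu (G M r₀ r a s c : ℝ) : ℝ → ℝ := fun u =>
  (r₀ ^ 8 * r ^ 2) + (2 * r₀ ^ 6 * r ^ 2 * a ^ 2 + r₀ ^ 8 * a ^ 2 * c + (-2) * G * M * r₀ ^ 8 * r) * u + (r₀ ^ 4 * r ^ 2 * a ^ 4 + 2 * r₀ ^ 6 * a ^ 4 * c + 4 * G * M * r₀ ^ 5 * r ^ 2 * a ^ 2 + (-4) * G * M * r₀ ^ 6 * r * a ^ 2) * u ^ 2 + (r₀ ^ 4 * a ^ 6 * c + 4 * G * M * r₀ ^ 3 * r ^ 2 * a ^ 4 + (-2) * G * M * r₀ ^ 4 * r * a ^ 4 + 4 * G * M * r₀ ^ 5 * a ^ 4 * c + (-4) * G ^ 2 * M ^ 2 * r₀ ^ 2 * r ^ 4 * a ^ 2 * s + (-8) * G ^ 2 * M ^ 2 * r₀ ^ 5 * r * a ^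 2 + 8 * G ^ 2 * M ^ 2 * r₀ ^ 5 * r * a ^ 2 * s) * u ^ 3 + (4 * G * M * r₀ ^ 3 * a ^ 6 * c + 4 * G ^ 2 * M ^ 2 * r₀ ^ 2 * r ^ 2 * a ^ 4 + (-8) * G ^ 2 * M ^ 2 * r₀ ^ 2 * r ^ 2 * a ^ 4 * s + 4 * G ^ 2 * M ^ 2 * r₀ ^ 2 * r ^ 2 * a ^ 4 * s ^ 2 + (-8) * G ^ 2 * M ^ 2 * r₀ ^ 3 * r * a ^ 4 + 8 * G ^ 2 * M ^ 2 * r₀ ^ 3 * r * a ^ 4 * s) * u ^ 4 + (4 * G ^ 2 * M ^ 2 * r₀ ^ 2 * a ^ 6 * c + (-4) * G ^ 2 * M ^ 2 * r₀ ^ 2 * a ^ 6 * s + 4 * G ^ 2 * M ^ 2 * r₀ ^ 2 * a ^ 6 * s ^ 2 + (-8) * G ^ 3 * M ^ 3 * r₀ ^ 2 * r * a ^ 4 + 16 * G ^ 3 * M ^ 3 * r₀ ^ 2 * r * a ^ 4 * s + (-8) * G ^ 3 * M ^ 3 * r₀ ^ 2 * r * a ^ 4 * s ^ 2) * u ^ 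5

noncomputable def kerrNud (G M r₀ r a s c : ℝ) (x : ℝ) : ℝ :=
  (2 * r₀ ^ 6 * r ^ 2 * a ^ 2 + r₀ ^ 8 * a ^ 2 * c + (-2) * G * M * r₀ ^ 8 * r) + 2 * (r₀ ^ 4 * r ^ 2 * a ^ 4 + 2 * r₀ ^ 6 * a ^ 4 * c + 4 * G * M * r₀ ^ 5 * r ^ 2 * a ^ 2 + (-4) * G * M * r₀ ^ 6 * r * a ^ 2) * x + 3 * (r₀ ^ 4 * a ^ 6 * c + 4 * G * M * r₀ ^ 3 * r ^ 2 * a ^ 4 + (-2) * G * M * r₀ ^ 4 * r * a ^ 4 + 4 * G * M * r₀ ^ 5 * a ^ 4 * c + (-4) * G ^ 2 * M ^ 2 * r₀ ^ 2 * r ^ 4 * a ^ 2 * s + (-8) * G ^ 2 * M ^ 2 * r₀ ^ 5 * r * a ^ 2 + 8 * G ^ 2 * M ^ 2 * r₀ ^ 5 * r * a ^ 2 * s) * x ^ 2 + 4 * (4 * G * M * r₀ ^ 3 * a ^ 6 * c + 4 * G ^ 2 * M ^ 2 * r₀ ^ 2 * r ^ 2 * a ^ 4 + (-8) * G ^ 2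 * M ^ 2 * r₀ ^ 2 * r ^ 2 * a ^ 4 * s + 4 * G ^ 2 * M ^ 2 * r₀ ^ 2 * r ^ 2 * a ^ 4 * s ^ 2 + (-8) * G ^ 2 * M ^ 2 * r₀ ^ 3 * r * a ^ 4 + 8 * G ^ 2 * M ^ 2 * r₀ ^ 3 * r * a ^ 4 * s) * x ^ 3 + 5 * (4 * G ^ 2 * M ^ 2 * r₀ ^ 2 * a ^ 6 * c + (-4) * G ^ 2 * M ^ 2 * r₀ ^ 2 * a ^ 6 * s + 4 * G ^ 2 * M ^ 2 * r₀ ^ 2 * a ^ 6 * s ^ 2 + (-8) * G ^ 3 * M ^ 3 * r₀ ^ 2 * r * a ^ 4 + 16 * G ^ 3 * M ^ 3 * r₀ ^ 2 * r * a ^ 4 * s + (-8) * G ^ 3 * M ^ 3 * r₀ ^ 2 * r * a ^ 4 * s ^ 2) * x ^ 4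

noncomputable def kerrDu (G M r₀ r a c : ℝ) : ℝ → ℝ := fun u =>
  (r₀ ^ 8 * r ^ 2) + (2 * r₀ ^ 6 * r ^ 2 * a ^ 2 + r₀ ^ 8 * a ^ 2 * c + (-2) * G * M * r₀ ^ 7 * r ^ 2) * u + (r₀ ^ 4 * r ^ 2 * a ^ 4 + 2 * r₀ ^ 6 * a ^ 4 * c + (-2) * G * M * r₀ ^ 7 * a ^ 2 * c) * u ^ 2 + (r₀ ^ 4 * a ^ 6 * c + 2 * G * M * r₀ ^ 3 * r ^ 2 * a ^ 4 + (-4) * G ^ 2 * M ^ 2 * r₀ ^ 4 * r ^ 2 * a ^ 2) * u ^ 3 + (2 * G * M * r₀ ^ 3 * a ^ 6 * c + (-4) * G ^ 2 * M ^ 2 * r₀ ^ 4 * a ^ 4 * c) * u ^ 4 + (0) * u ^ 5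

noncomputable def kerrDud (G M r₀ r a c : ℝ) (x : ℝ) : ℝ :=
  (2 * r₀ ^ 6 * r ^ 2 * a ^ 2 + r₀ ^ 8 * a ^ 2 * c + (-2) * G * M * r₀ ^ 7 * r ^ 2) + 2 * (r₀ ^ 4 * r ^ 2 * a ^ 4 + 2 * r₀ ^ 6 * a ^ 4 * c + (-2) * G * M * r₀ ^ 7 * a ^ 2 * c) * x + 3 * (r₀ ^ 4 * a ^ 6 * c + 2 * G * M * r₀ ^ 3 * r ^ 2 * a ^ 4 + (-4) * G ^ 2 * M ^ 2 * r₀ ^ 4 * r ^ 2 * a ^ 2) * x ^ 2 + 4 * (2 * G * M * r₀ ^ 3 * a ^ 6 * c + (-4) * G ^ 2 * M ^ 2 * r₀ ^ 4 * a ^ 4 * c) * x ^ 3 + 5 * (0) * x ^ 4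

private lemma kerrNu_hasDeriv (G M r₀ r a s c x : ℝ) :
    HasDerivAt (kerrNu G M r₀ r a s c) (kerrNud G M r₀ r a s c x) x := by
  unfold kerrNu kerrNud
  exact kerr_poly5 _ _ _ _ _ _ x

private lemma kerrDu_hasDeriv (G M r₀ r a c x : ℝ) :
    HasDerivAt (kerrDu G M r₀ r a c) (kerrDud G M r₀ r a c x) x := by
  unfold kerrDu kerrDud
  exact kerr_poly5 _ _ _ _ _ _ x

private lemma kerrNu_zero (G M r₀ r a s c : ℝ) :
    kerrNu G M r₀ r a s c 0 = r₀ ^ 8 * r ^ 2 := by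
  simp only [kerrNu]; ring

private lemma kerrDu_zero (G M r₀ r a c : ℝ) :
    kerrDu G M r₀ r a c 0 = r₀ ^ 8 * r ^ 2 := by
  simp only [kerrDu]; ring

private lemma kerrNud_zero (G M r₀ r a s c : ℝ) :
    kerrNud G M r₀ r a s c 0
      = 2 * r₀ ^ 6 * r ^ 2 * a ^ 2 + r₀ ^ 8 * a ^ 2 * c - 2 * G * M * r₀ ^ 8 * r := by
  simp only [kerrNud]; ring

private lemma kerrDud_zero (G M r₀ r a c : ℝ) :
    kerrDud G M r₀ r a c 0
      = 2 * r₀ ^ 6 * r ^ 2 * a ^ 2 + r₀ ^ 8 * a ^ 2 * c - 2 * G * M * r₀ ^ 7 * r ^ 2 := by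
  simp only [kerrDud]; ring

/-- For the timelike Killing field of a zero angular momentum
observer (ZAMO) at Boyer–Lindquist radius `r₀` in the equatorial plane of Kerr
spacetime, the normalized norm `α(λ) = λ‖K‖` evaluated at Boyer–Lindquist
coordinates `(r, θ)` satisfies `α(0) = 1`, `α'(0) = 0`,
`α''(0) = 2GM/r₀ − 2GM/r`, and `α ≡ 1` at the ZAMO position. -/
theorem kerr_zamo_killing_norm
    (G M r₀ r : ℝ) (hG : 0 < G) (hM : 0 < M) (hr₀ : 0 < r₀) (hr : 0 < r)
    (a θ : ℝ)
    (ρsq Δ Sig Δ₀ Sig₀ α : ℝ → ℝ)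
    (hρ : ∀ l, ρsq l = r ^ 2 + l ^ 2 * a ^ 2 * Real.cos θ ^ 2)
    (hΔ : ∀ l, Δ l = r ^ 2 - 2 * G * M * l ^ 2 * r + l ^ 2 * a ^ 2)
    (hSig : ∀ l, Sig l = (r ^ 2 + l ^ 2 * a ^ 2) ^ 2 - l ^ 2 * a ^ 2 * Δ l * Real.sin θ ^ 2)
    (hΔ₀ : ∀ l, Δ₀ l = r₀ ^ 2 - 2 * G * M * l ^ 2 * r₀ + l ^ 2 * a ^ 2)
    (hSig₀ : ∀ l, Sig₀ l = (r₀ ^ 2 + l ^ 2 * a ^ 2) ^ 2 - l ^ 2 * a ^ 2 * Δ₀ l)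
    (hα : ∀ l, α l = Real.sqrt
        (((ρsq l - 2 * G * M * l ^ 2 * r) * Sig₀ l ^ 2
            - 4 * G ^ 2 * M ^ 2 * a ^ 2 * l ^ 6 * r₀ *
              (r₀ * Sig l - 2 * r * Sig₀ l) * Real.sin θ ^ 2) /
          (r₀ ^ 2 * ρsq l * Δ₀ l * Sig₀ l))) :
    α 0 = 1 ∧
    deriv α 0 = 0 ∧
    deriv (deriv α) 0 = 2 * G * M / r₀ - 2 * G * M / r ∧
    (r = r₀ → θ = π / 2 → ∀ l, 0 < Δ₀ l → 0 < Sig₀ l → α l = 1) := by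
  set Nu : ℝ → ℝ := kerrNu G M r₀ r a (Real.sin θ ^ 2) (Real.cos θ ^ 2) with hNu_def
  set Du : ℝ → ℝ := kerrDu G M r₀ r a (Real.cos θ ^ 2) with hDu_def
  set Nud : ℝ → ℝ := kerrNud G M r₀ r a (Real.sin θ ^ 2) (Real.cos θ ^ 2) with hNud_def
  set Dud : ℝ → ℝ := kerrDud G M r₀ r a (Real.cos θ ^ 2) with hDud_def
  have hA : α = fun l => Real.sqrt (Nu (l ^ 2) / Du (l ^ 2)) := by
    funext l
    rw [hα l, hρ l, hSig l, hΔ l, hSig₀ l, hΔ₀ l, hNu_def, hDu_def]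
    simp only [kerrNu, kerrDu]
    congr 1
    congr 1 <;> ring
  have hNuD : ∀ x, HasDerivAt Nu (Nud x) x := fun x => kerrNu_hasDeriv _ _ _ _ _ _ _ x
  have hDuD : ∀ x, HasDerivAt Du (Dud x) x := fun x => kerrDu_hasDeriv _ _ _ _ _ _ x
  have hNu0 : Nu 0 = r₀ ^ 8 * r ^ 2 := kerrNu_zero _ _ _ _ _ _ _
  have hDu0 : Du 0 = r₀ ^ 8 * r ^ 2 := kerrDu_zero _ _ _ _ _ _
  have hNud0 : Nud 0 = 2 * r₀ ^ 6 * r ^ 2 * a ^ 2 + r₀ ^ 8 * a ^ 2 * Real.cos θ ^ 2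
      - 2 * G * M * r₀ ^ 8 * r := kerrNud_zero _ _ _ _ _ _ _
  have hDud0 : Dud 0 = 2 * r₀ ^ 6 * r ^ 2 * a ^ 2 + r₀ ^ 8 * a ^ 2 * Real.cos θ ^ 2
      - 2 * G * M * r₀ ^ 7 * r ^ 2 := kerrDud_zero _ _ _ _ _ _
  have hbase : (0:ℝ) < r₀ ^ 8 * r ^ 2 := by positivity
  have hzsq : ((0:ℝ) ^ 2) = 0 := by norm_num
  have hDupos : (0:ℝ) < Du 0 := by rw [hDu0]; exact hbase
  have hNupos : (0:ℝ) < Nu 0 := by rw [hNu0]; exact hbase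
  have hevu : ∀ᶠ u in nhds (0:ℝ), 0 < Du u ∧ 0 < Nu u :=
    (((hDuD 0).continuousAt.eventually (eventually_gt_nhds hDupos)).and
      ((hNuD 0).continuousAt.eventually (eventually_gt_nhds hNupos)))
  have hsq : Filter.Tendsto (fun l : ℝ => l ^ 2) (nhds 0) (nhds 0) := by
    have h := (continuous_pow 2 : Continuous fun x : ℝ => x ^ 2).tendsto 0
    simpa using h
  set g : ℝ → ℝ := fun l =>
    (Nud (l ^ 2) * Du (l ^ 2) - Nu (l ^ 2) * Dud (l ^ 2)) / Du (l ^ 2) ^ 2 /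
      (2 * Real.sqrt (Nu (l ^ 2) / Du (l ^ 2))) * (2 * l) with hg_def
  have hαderiv : ∀ᶠ l in nhds (0:ℝ), HasDerivAt α (g l) l := by
    filter_upwards [hsq.eventually hevu] with l hl
    obtain ⟨hDp, hNp⟩ := hl
    have hg2 : HasDerivAt (fun x : ℝ => x ^ 2) (2 * l) l := by
      simpa using hasDerivAt_pow 2 l
    have hF : HasDerivAt (fun u => Nu u / Du u)
        ((Nud (l ^ 2) * Du (l ^ 2) - Nu (l ^ 2) * Dud (l ^ 2)) / Du (l ^ 2) ^ 2) (l ^ 2) :=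
      (hNuD (l ^ 2)).div (hDuD (l ^ 2)) hDp.ne'
    have hcomp := HasDerivAt.comp (h₂ := fun u => Nu u / Du u) (h := fun x : ℝ => x ^ 2) l hF hg2
    have hFpos : 0 < Nu (l ^ 2) / Du (l ^ 2) := div_pos hNp hDp
    have hsqrt := HasDerivAt.comp (h₂ := Real.sqrt)
        (h := (fun u => Nu u / Du u) ∘ fun x : ℝ => x ^ 2) l
        (Real.hasDerivAt_sqrt hFpos.ne') hcomp
    have hval : g l = 1 / (2 * Real.sqrt (Nu (l ^ 2) / Du (l ^ 2))) *
        ((Nud (l ^ 2) * Du (l ^ 2) - Nu (l ^ 2) * Dud (l ^ 2)) / Du (l ^ 2) ^ 2 * (2 * l)) := by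
      simp only [hg_def]; ring
    rw [hA, hval]
    exact hsqrt
  have hα0 : α 0 = 1 := by
    simp only [hA]
    rw [hzsq, hNu0, hDu0, div_self hbase.ne', Real.sqrt_one]
  have hg0 : g 0 = 0 := by simp only [hg_def]; norm_num
  have hd1 : deriv α 0 = 0 := by rw [hαderiv.self_of_nhds.deriv, hg0]
  have hEq : deriv α =ᶠ[nhds 0] g := hαderiv.mono fun l h => h.deriv
  refine ⟨hα0, hd1, ?_, ?_⟩
  · rw [hEq.deriv_eq]
    have hdNu : DifferentiableAt ℝ (fun l : ℝ => Nu (l ^ 2)) 0 := by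
      rw [hNu_def]; simp only [kerrNu]; fun_prop
    have hdDu : DifferentiableAt ℝ (fun l : ℝ => Du (l ^ 2)) 0 := by
      rw [hDu_def]; simp only [kerrDu]; fun_prop
    have hdNud : DifferentiableAt ℝ (fun l : ℝ => Nud (l ^ 2)) 0 := by
      rw [hNud_def]; simp only [kerrNud]; fun_prop
    have hdDud : DifferentiableAt ℝ (fun l : ℝ => Dud (l ^ 2)) 0 := by
      rw [hDud_def]; simp only [kerrDud]; fun_prop
    have hDu0' : Du ((0:ℝ) ^ 2) ≠ 0 := by rw [hzsq, hDu0]; exact hbase.ne'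
    have hφ1 : Nu ((0:ℝ) ^ 2) / Du ((0:ℝ) ^ 2) = 1 := by
      rw [hzsq, hNu0, hDu0, div_self hbase.ne']
    have hdiffA : DifferentiableAt ℝ (fun l : ℝ =>
        (Nud (l ^ 2) * Du (l ^ 2) - Nu (l ^ 2) * Dud (l ^ 2)) / Du (l ^ 2) ^ 2 /
          (2 * Real.sqrt (Nu (l ^ 2) / Du (l ^ 2)))) 0 := by
      apply DifferentiableAt.div
      · exact ((hdNud.mul hdDu).sub (hdNu.mul hdDud)).div (hdDu.pow 2)
          (by rw [hzsq]; rw [hzsq] at hDu0'; exact pow_ne_zero 2 hDu0')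
      · exact ((hdNu.div hdDu hDu0').sqrt (by show Nu ((0:ℝ) ^ 2) / Du ((0:ℝ) ^ 2) ≠ 0; rw [hφ1]; norm_num)).const_mul 2
      · rw [hφ1, Real.sqrt_one]; norm_num
    have h2l : HasDerivAt (fun l : ℝ => 2 * l) 2 (0:ℝ) := by
      simpa using (hasDerivAt_id (0:ℝ)).const_mul 2
    have hkey : deriv g 0 = deriv (fun l : ℝ =>
        (Nud (l ^ 2) * Du (l ^ 2) - Nu (l ^ 2) * Dud (l ^ 2)) / Du (l ^ 2) ^ 2 /
          (2 * Real.sqrt (Nu (l ^ 2) / Du (l ^ 2)))) 0 * (2 * 0)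
        + (Nud ((0:ℝ) ^ 2) * Du ((0:ℝ) ^ 2) - Nu ((0:ℝ) ^ 2) * Dud ((0:ℝ) ^ 2)) / Du ((0:ℝ) ^ 2) ^ 2 /
          (2 * Real.sqrt (Nu ((0:ℝ) ^ 2) / Du ((0:ℝ) ^ 2))) * 2 :=
      (hdiffA.hasDerivAt.mul h2l).deriv
    rw [hkey, hφ1, Real.sqrt_one, hzsq, hNu0, hDu0, hNud0, hDud0]
    have hr0 : r₀ ≠ 0 := hr₀.ne'
    have hrne : r ≠ 0 := hr.ne'
    field_simp
    ring
  · intro hrr hθ l hΔp hSigp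
    subst hθ
    have hcos : Real.cos (π/2) = 0 := Real.cos_pi_div_two
    have hsin : Real.sin (π/2) = 1 := Real.sin_pi_div_two
    have hρl : ρsq l = r ^ 2 := by rw [hρ l, hcos]; ring
    have hden : 0 < r₀ ^ 2 * ρsq l * Δ₀ l * Sig₀ l := by
      rw [hρl]
      exact mul_pos (mul_pos (mul_pos (pow_pos hr₀ 2) (pow_pos hr 2)) hΔp) hSigp
    rw [hα l]
    have hnum : (ρsq l - 2 * G * M * l ^ 2 * r) * Sig₀ l ^ 2
        - 4 * G ^ 2 * M ^ 2 * a ^ 2 * l ^ 6 * r₀ *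
          (r₀ * Sig l - 2 * r * Sig₀ l) * Real.sin (π/2) ^ 2
        = r₀ ^ 2 * ρsq l * Δ₀ l * Sig₀ l := by
      rw [hρ l, hSig l, hΔ l, hSig₀ l, hΔ₀ l, hsin, hcos, hrr]
      ring
    rw [hnum, div_self hden.ne', Real.sqrt_one]
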